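/- In the icl=2 gadget construction, the graph G has a perfect Γ-cycle packing if and only if T contains a perfect matching, that is, a subset M ⊆ T such that every element of X ∪ Y ∪ Z belongs to exactly one triple of M. -/

import Mathlib

open scoped Classical

/-- An `n`-partitioned compatibility graph: a finite directed graph on a finite
set of natural-number vertices, without self-loops, whose vertex set is
partitioned into `n` nonempty countries. -/
structure PartGraph (n : ℕ) where
  verts : Finset ℕ
  arcs : Finset (ℕ × ℕ)
  arcs_mem : ∀ p ∈ arcs, p.1 ∈ verts ∧ p.2 ∈ verts
  no_loops : ∀ v, (v, v) ∉ arcs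
  country : ℕ → Fin n
  country_nonempty : ∀ i : Fin n, ∃ v ∈ verts, country v = i

/-- Cyclic access to the entries of a list. -/
def cyc (l : List ℕ) (k : ℕ) : ℕ := l.getD (k % l.length) 0

/-- `l` is a (directed) cycle of `G`: a cyclic sequence of at least two distinct
vertices, consecutive ones (cyclically) joined by arcs. -/
def IsCycle {n : ℕ} (G : PartGraph n) (l : List ℕ) : Prop :=
  2 ≤ l.length ∧ l.Nodup ∧ (∀ v ∈ l, v ∈ G.verts) ∧
    ∀ k < l.length, (cyc l k, cyc l (k + 1)) ∈ G.arcs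

/-- All vertices of `l` belong to country `i`. -/
def IsNationalTo {n : ℕ} (G : PartGraph n) (l : List ℕ) (i : Fin n) : Prop :=
  ∀ v ∈ l, G.country v = i

/-- A national cycle: all vertices in one country. -/
def IsNational {n : ℕ} (G : PartGraph n) (l : List ℕ) : Prop :=
  ∃ i, IsNationalTo G l i

/-- An international cycle: not national (equivalently, for cycles, it contains
an international arc). -/
def IsInternational {n : ℕ} (G : PartGraph n) (l : List ℕ) : Prop :=
  ¬ IsNational G l

/-- Position `k` (taken cyclically) is the start of a `V_i`-segment of `l`:
the vertex there is in country `i` but the cyclically preceding one is not. -/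
def segStart {n : ℕ} (G : PartGraph n) (l : List ℕ) (i : Fin n) (k : ℕ) : Prop :=
  G.country (cyc l k) = i ∧ G.country (cyc l (k + l.length - 1)) ≠ i

/-- The size of the run of consecutive (cyclic) positions of `l`, starting at
position `k`, whose vertices are in country `i`.  At a segment start this is
exactly the size of that `V_i`-segment. -/
noncomputable def runLen {n : ℕ} (G : PartGraph n) (l : List ℕ) (i : Fin n) (k : ℕ) : ℕ :=
  ((Finset.range l.length).filter
    fun j => ∀ j' ≤ j, G.country (cyc l (k + j')) = i).card

/-- The number of `V_i`-segments of the cycle `l`. -/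
noncomputable def numSegs {n : ℕ} (G : PartGraph n) (l : List ℕ) (i : Fin n) : ℕ :=
  ((Finset.range l.length).filter fun k => segStart G l i k).card

/-- A set `Γ` of country-specific parameters for `n` countries. -/
structure Params (n : ℕ) where
  icl : ℕ∞
  ncl : Fin n → ℕ∞
  iss : Fin n → ℕ∞
  isn : Fin n → ℕ∞
  icl_ne_one : icl ≠ 1
  ncl_ne_one : ∀ i, ncl i ≠ 1
  iss_pos : ∀ i, 1 ≤ iss i
  isn_pos : ∀ i, 1 ≤ isn i

/-- `l` is a `Γ`-cycle of `(G, 𝒱)`. -/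
def IsGammaCycle {n : ℕ} (G : PartGraph n) (Γ : Params n) (l : List ℕ) : Prop :=
  IsCycle G l ∧
    ((∃ i, IsNationalTo G l i ∧ (l.length : ℕ∞) ≤ Γ.ncl i) ∨
      (IsInternational G l ∧ (l.length : ℕ∞) ≤ Γ.icl ∧
        (∀ i, ∀ k < l.length, segStart G l i k → (runLen G l i k : ℕ∞) ≤ Γ.iss i) ∧
        (∀ i, (numSegs G l i : ℕ∞) ≤ Γ.isn i)))

/-- A cycle packing of `G`: a set of pairwise vertex-disjoint cycles. -/
def IsPacking {n : ℕ} (G : PartGraph n) (P : Finset (List ℕ)) : Prop :=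
  (∀ l ∈ P, IsCycle G l) ∧
    ∀ l ∈ P, ∀ l' ∈ P, l ≠ l' → ∀ v ∈ l, v ∉ l'

/-- The size of a cycle packing: total number of arcs (= vertices) of its cycles. -/
def packSize (P : Finset (List ℕ)) : ℕ := ∑ l ∈ P, l.length

/-- A `Γ`-cycle packing of `(G, 𝒱)`. -/
def IsGammaPackingG {n : ℕ} (G : PartGraph n) (Γ : Params n) (P : Finset (List ℕ)) : Prop :=
  IsPacking G P ∧ ∀ l ∈ P, IsGammaCycle G Γ l


/-- The arcs of the `icl = 2` gadget associated with a triple `t = (x,y,z)`;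
`a t 0, …, a t 5` are the fresh vertices `a_i^1, …, a_i^6`. -/
def gadgetArcs2 (a : ℕ × ℕ × ℕ → Fin 6 → ℕ) (t : ℕ × ℕ × ℕ) : Finset (ℕ × ℕ) :=
  [(t.1, a t 0), (a t 0, t.1), (t.2.1, a t 2), (a t 2, t.2.1), (t.2.2, a t 4), (a t 4, t.2.2),
   (a t 0, a t 1), (a t 1, a t 0), (a t 2, a t 3), (a t 3, a t 2), (a t 4, a t 5), (a t 5, a t 4),
   (a t 1, a t 3), (a t 3, a t 5), (a t 5, a t 1)].toFinset

/-- The parameters `Γ = (2, icl = 2, ncl = (3,0), iss = (1,1), isn = (1,1))`. -/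
def gadgetParams2 : Params 2 where
  icl := 2
  ncl := fun i => if i = 0 then 3 else 0
  iss := fun _ => 1
  isn := fun _ => 1
  icl_ne_one := by norm_num
  ncl_ne_one := by intro i; split <;> norm_num
  iss_pos := fun _ => le_refl _
  isn_pos := fun _ => le_refl _

lemma cyc_mod (l : List ℕ) (k : ℕ) : cyc l (k % l.length) = cyc l k := by
  simp [cyc, Nat.mod_mod]

lemma cyc_add_length (l : List ℕ) (k : ℕ) : cyc l (k + l.length) = cyc l k := by
  simp [cyc, Nat.add_mod_right]

lemma cyc_mem (l : List ℕ) (k : ℕ) (h : 0 < l.length) : cyc l k ∈ l := by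
  unfold cyc
  have : k % l.length < l.length := Nat.mod_lt _ h
  rw [List.getD_eq_getElem _ _ this]
  exact List.getElem_mem _

lemma exists_cyc_index {l : List ℕ} {v : ℕ} (h : v ∈ l) :
    ∃ k < l.length, cyc l k = v := by
  obtain ⟨k, hk, hv⟩ := List.mem_iff_getElem.1 h
  exact ⟨k, hk, by unfold cyc; rw [Nat.mod_eq_of_lt hk, List.getD_eq_getElem _ _ hk]; exact hv⟩

lemma pred_arc {n : ℕ} {G : PartGraph n} {l : List ℕ} (hc : IsCycle G l)
    (k : ℕ) : (cyc l (k + l.length - 1), cyc l k) ∈ G.arcs := by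
  have hlen : 0 < l.length := lt_of_lt_of_le (by norm_num) hc.1
  set m := (k + l.length - 1) % l.length with hm
  have hmlt : m < l.length := Nat.mod_lt _ hlen
  have h1 : cyc l m = cyc l (k + l.length - 1) := cyc_mod _ _
  have h2 : cyc l (m + 1) = cyc l k := by
    have : (m + 1) % l.length = k % l.length := by
      rw [hm]
      rw [Nat.mod_add_mod]
      have : k + l.length - 1 + 1 = k + l.length := by omega
      rw [this, Nat.add_mod_right]
    unfold cyc; rw [this]
  have := hc.2.2.2 m hmlt
  rwa [h1, h2] at this

lemma succ_arc {n : ℕ} {G : PartGraph n} {l : List ℕ} (hc : IsCycle G l)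
    (k : ℕ) : (cyc l k, cyc l (k + 1)) ∈ G.arcs := by
  have hlen : 0 < l.length := lt_of_lt_of_le (by norm_num) hc.1
  have hmlt : k % l.length < l.length := Nat.mod_lt _ hlen
  have := hc.2.2.2 _ hmlt
  rwa [cyc_mod, show cyc l (k % l.length + 1) = cyc l (k+1) by
    unfold cyc; rw [Nat.mod_add_mod]] at this

/-- Structure of a length-2 cycle. -/
lemma two_cycle_struct {n : ℕ} {G : PartGraph n} {l : List ℕ} (hc : IsCycle G l)
    (hl : l.length = 2) : ∃ u w, l = [u, w] ∧ u ≠ w ∧ (u, w) ∈ G.arcs ∧ (w, u) ∈ G.arcs := by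
  match l, hl with
  | [u, w], _ =>
    have h0 := hc.2.2.2 0 (by norm_num)
    have h1 := hc.2.2.2 1 (by norm_num)
    simp [cyc] at h0 h1
    refine ⟨u, w, rfl, ?_, h0, h1⟩
    intro h; subst h
    exact G.no_loops u h0

/-- classification of Γ-cycles for the gadget parameters. -/
lemma gamma_classify {G : PartGraph 2} {l : List ℕ}
    (h : IsGammaCycle G gadgetParams2 l) :
    IsCycle G l ∧ ((IsNationalTo G l 0 ∧ l.length ≤ 3) ∨ l.length = 2) := by
  obtain ⟨hc, h2⟩ := h
  refine ⟨hc, ?_⟩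
  rcases h2 with ⟨i, hnat, hlen⟩ | ⟨_, hlen, _, _⟩
  · fin_cases i
    · left
      refine ⟨hnat, ?_⟩
      simp only [show gadgetParams2.ncl ((fun i => i) ⟨0, by norm_num⟩) = (3 : ℕ∞) from rfl] at hlen
      exact_mod_cast hlen
    · exfalso
      simp only [show gadgetParams2.ncl ((fun i => i) ⟨1, by norm_num⟩) = (0 : ℕ∞) from rfl] at hlen
      have h2 := hc.1
      have : l.length = 0 := by exact_mod_cast le_antisymm hlen (zero_le)
      omega
  · right
    rw [show gadgetParams2.icl = (2 : ℕ∞) from rfl] at hlen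
    have h2 := hc.1
    have : l.length ≤ 2 := by exact_mod_cast hlen
    omega

lemma cyc_two (u w k : ℕ) :
    (cyc [u,w] k = u ∧ cyc [u,w] (k+1) = w) ∨ (cyc [u,w] k = w ∧ cyc [u,w] (k+1) = u) := by
  rcases Nat.mod_two_eq_zero_or_one k with h | h
  · have h' : (k+1) % 2 = 1 := by omega
    left; constructor <;> simp [cyc, h, h']
  · have h' : (k+1) % 2 = 0 := by omega
    right; constructor <;> simp [cyc, h, h']

lemma gamma_two {G : PartGraph 2} {u w : ℕ} (hu : u ∈ G.verts) (hw : w ∈ G.verts)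
    (huw : (u, w) ∈ G.arcs) (hwu : (w, u) ∈ G.arcs) (hco : G.country u ≠ G.country w) :
    IsGammaCycle G gadgetParams2 [u, w] := by
  have hne : u ≠ w := fun h => hco (by rw [h])
  constructor
  · refine ⟨by simp, by simp [hne], by intro v hv; simp at hv; rcases hv with rfl | rfl <;> assumption, ?_⟩
    intro k hk
    simp at hk
    interval_cases k <;> simp [cyc] <;> assumption
  · right
    refine ⟨?_, ?_, ?_, ?_⟩
    · rintro ⟨i, hi⟩
      have h1 := hi u (by simp)
      have h2 := hi w (by simp)
      exact hco (h1.trans h2.symm)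
    · exact le_refl _
    · intro i k hk hseg
      show ((runLen G [u,w] i k : ℕ∞) ≤ 1)
      have hr : runLen G [u,w] i k ≤ 1 := by
        apply Finset.card_le_one.mpr
        intro j1 h1 j2 h2
        simp only [Finset.mem_filter, Finset.mem_range, List.length_cons, List.length_nil] at h1 h2
        have key : ∀ j, j < 2 → (∀ j' ≤ j, G.country (cyc [u,w] (k+j')) = i) → j = 0 := by
          intro j hj hall
          by_contra hj0
          have hj1 : j = 1 := by omega
          subst hj1
          have e0 := hall 0 (by omega)
          have e1 := hall 1 (by omega)
          simp only [Nat.add_zero] at e0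
          rcases cyc_two u w k with ⟨c1, c2⟩ | ⟨c1, c2⟩ <;>
            rw [c1] at e0 <;> rw [c2] at e1 <;>
            first
            | exact hco (e0.trans e1.symm)
            | exact hco (e1.trans e0.symm)
        rw [key j1 h1.1 h1.2, key j2 h2.1 h2.2]
      exact_mod_cast hr
    · intro i
      show ((numSegs G [u,w] i : ℕ∞) ≤ 1)
      have hr : numSegs G [u,w] i ≤ 1 := by
        apply Finset.card_le_one.mpr
        intro k1 h1 k2 h2
        simp only [Finset.mem_filter, Finset.mem_range, List.length_cons, List.length_nil] at h1 h2
        by_contra hne12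
        have hk1 : k1 = 0 ∨ k1 = 1 := by omega
        have hk2 : k2 = 0 ∨ k2 = 1 := by omega
        have c0 : cyc [u,w] 0 = u := by simp [cyc]
        have c1 : cyc [u,w] 1 = w := by simp [cyc]
        rcases hk1 with rfl | rfl <;> rcases hk2 with rfl | rfl <;>
          first
          | exact hne12 rfl
          | (apply hco
             have e1 := h1.2.1
             have e2 := h2.2.1
             rw [c0] at * ; rw [c1] at *
             first
             | exact e1.trans e2.symm
             | exact e2.trans e1.symm)
      exact_mod_cast hr

lemma gamma_tri {G : PartGraph 2} {v1 v2 v3 : ℕ}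
    (h1 : v1 ∈ G.verts) (h2 : v2 ∈ G.verts) (h3 : v3 ∈ G.verts)
    (a12 : (v1, v2) ∈ G.arcs) (a23 : (v2, v3) ∈ G.arcs) (a31 : (v3, v1) ∈ G.arcs)
    (d12 : v1 ≠ v2) (d13 : v1 ≠ v3) (d23 : v2 ≠ v3)
    (c1 : G.country v1 = 0) (c2 : G.country v2 = 0) (c3 : G.country v3 = 0) :
    IsGammaCycle G gadgetParams2 [v1, v2, v3] := by
  constructor
  · refine ⟨by simp, by simp [d12, d13, d23], by intro v hv; simp at hv; rcases hv with rfl | rfl | rfl <;> assumption, ?_⟩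
    intro k hk
    simp at hk
    interval_cases k <;> simp [cyc] <;> assumption
  · left
    refine ⟨0, ?_, ?_⟩
    · intro v hv
      simp at hv; rcases hv with rfl | rfl | rfl <;> assumption
    · show ((3 : ℕ∞) ≤ gadgetParams2.ncl 0)
      exact le_refl _
set_option linter.unreachableTactic false
set_option linter.unusedTactic false
set_option maxHeartbeats 1000000 in
/-- In the `icl = 2` gadget construction, `G` has a perfect
`Γ`-cycle packing if and only if `T` contains a perfect matching, i.e. a
subset `M ⊆ T` such that every element of `X ∪ Y ∪ Z` belongs to exactly one
triple of `M`. -/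
theorem gadget2_perfect_packing_iff_matching
    (X Y Z : Finset ℕ) (T : Finset (ℕ × ℕ × ℕ)) (a : ℕ × ℕ × ℕ → Fin 6 → ℕ)
    (hX : X.Nonempty) (hY : Y.Nonempty) (hZ : Z.Nonempty)
    (hXY : Disjoint X Y) (hXZ : Disjoint X Z) (hYZ : Disjoint Y Z)
    (hT : T.Nonempty) (hTsub : ∀ t ∈ T, t.1 ∈ X ∧ t.2.1 ∈ Y ∧ t.2.2 ∈ Z)
    (hfresh : ∀ t ∈ T, ∀ j, a t j ∉ X ∪ Y ∪ Z)
    (hainj : ∀ t ∈ T, ∀ t' ∈ T, ∀ j j', a t j = a t' j' → t = t' ∧ j = j')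
    (G : PartGraph 2)
    (hverts : G.verts = (X ∪ Y ∪ Z) ∪ T.biUnion fun t => Finset.image (a t) Finset.univ)
    (harcs : G.arcs = T.biUnion fun t => gadgetArcs2 a t)
    (hcountry : ∀ v, G.country v =
      if ∃ t ∈ T, v = a t 0 ∨ v = a t 2 ∨ v = a t 4 then 1 else 0) :
    (∃ P : Finset (List ℕ), IsGammaPackingG G gadgetParams2 P ∧
        ∀ v ∈ G.verts, ∃ l ∈ P, v ∈ l) ↔
      ∃ M ⊆ T, ∀ u ∈ X ∪ Y ∪ Z,
        ∃! t, t ∈ M ∧ (u = t.1 ∨ u = t.2.1 ∨ u = t.2.2) := by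
  -- basic derived facts
  have hfresh' : ∀ t ∈ T, ∀ (j : Fin 6), ∀ u, u ∈ X ∪ Y ∪ Z → a t j ≠ u := by
    intro t ht j u hu h
    exact hfresh t ht j (by rw [h]; exact hu)
  have hane : ∀ t ∈ T, ∀ (j j' : Fin 6), j ≠ j' → a t j ≠ a t j' := by
    intro t ht j j' hne h
    exact hne (hainj t ht t ht j j' h).2
  have hbase : ∀ t ∈ T, t.1 ∈ X ∪ Y ∪ Z ∧ t.2.1 ∈ X ∪ Y ∪ Z ∧ t.2.2 ∈ X ∪ Y ∪ Z := by
    intro t ht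
    obtain ⟨h1, h2, h3⟩ := hTsub t ht
    refine ⟨?_, ?_, ?_⟩ <;> simp only [Finset.mem_union] <;> tauto
  have hcA : ∀ t ∈ T, G.country (a t 0) = 1 ∧ G.country (a t 2) = 1 ∧ G.country (a t 4) = 1 := by
    intro t ht
    refine ⟨?_, ?_, ?_⟩ <;> rw [hcountry] <;>
      [exact if_pos ⟨t, ht, Or.inl rfl⟩; exact if_pos ⟨t, ht, Or.inr (Or.inl rfl)⟩;
       exact if_pos ⟨t, ht, Or.inr (Or.inr rfl)⟩]
  have hcB : ∀ t ∈ T, G.country (a t 1) = 0 ∧ G.country (a t 3) = 0 ∧ G.country (a t 5) = 0 := by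
    intro t ht
    refine ⟨?_, ?_, ?_⟩ <;> rw [hcountry] <;> apply if_neg <;>
      rintro ⟨t', ht', h | h | h⟩ <;>
      exact absurd (hainj t ht t' ht' _ _ h).2 (by decide)
  have hcU : ∀ u ∈ X ∪ Y ∪ Z, G.country u = 0 := by
    intro u hu
    rw [hcountry]
    apply if_neg
    rintro ⟨t', ht', h | h | h⟩ <;> exact hfresh' t' ht' _ u hu h.symm
  have hvA : ∀ t ∈ T, ∀ j : Fin 6, a t j ∈ G.verts := by
    intro t ht j
    rw [hverts]
    apply Finset.mem_union_right
    exact Finset.mem_biUnion.2 ⟨t, ht, Finset.mem_image.2 ⟨j, Finset.mem_univ _, rfl⟩⟩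
  have hvU : ∀ u ∈ X ∪ Y ∪ Z, u ∈ G.verts := by
    intro u hu
    rw [hverts]
    exact Finset.mem_union_left _ hu
  have harc : ∀ p, p ∈ G.arcs ↔ ∃ t ∈ T, p ∈ gadgetArcs2 a t := by
    intro p
    rw [harcs]
    simp
  have hout1 : ∀ t ∈ T, ∀ w, (a t 1, w) ∈ G.arcs → w = a t 0 ∨ w = a t 3 := by
    intro t ht w h
    rw [harc] at h
    obtain ⟨t', ht', hp⟩ := h
    simp only [gadgetArcs2, List.toFinset_cons, List.toFinset_nil, LawfulSingleton.insert_empty_eq,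
      Finset.mem_insert, Finset.mem_singleton, Prod.mk.injEq] at hp
    rcases hp with ⟨h1,h2⟩|⟨h1,h2⟩|⟨h1,h2⟩|⟨h1,h2⟩|⟨h1,h2⟩|⟨h1,h2⟩|⟨h1,h2⟩|⟨h1,h2⟩|⟨h1,h2⟩|⟨h1,h2⟩|⟨h1,h2⟩|⟨h1,h2⟩|⟨h1,h2⟩|⟨h1,h2⟩|⟨h1,h2⟩ <;>
    first
    | exact absurd h1 (hfresh' t ht _ _ ((hbase t' ht').1))
    | exact absurd h1 (hfresh' t ht _ _ ((hbase t' ht').2.1))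
    | exact absurd h1 (hfresh' t ht _ _ ((hbase t' ht').2.2))
    | (obtain ⟨rfl, hj⟩ := hainj t ht t' ht' _ _ h1
       first
       | exact absurd hj (by decide)
       | tauto)
  have hout0 : ∀ t ∈ T, ∀ w, (a t 0, w) ∈ G.arcs → w = t.1 ∨ w = a t 1 := by
    intro t ht w h
    rw [harc] at h
    obtain ⟨t', ht', hp⟩ := h
    simp only [gadgetArcs2, List.toFinset_cons, List.toFinset_nil, LawfulSingleton.insert_empty_eq,
      Finset.mem_insert, Finset.mem_singleton, Prod.mk.injEq] at hp
    rcases hp with ⟨h1,h2⟩|⟨h1,h2⟩|⟨h1,h2⟩|⟨h1,h2⟩|⟨h1,h2⟩|⟨h1,h2⟩|⟨h1,h2⟩|⟨h1,h2⟩|⟨h1,h2⟩|⟨h1,h2⟩|⟨h1,h2⟩|⟨h1,h2⟩|⟨h1,h2⟩|⟨h1,h2⟩|⟨h1,h2⟩ <;>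
    first
    | exact absurd h1 (hfresh' t ht _ _ ((hbase t' ht').1))
    | exact absurd h1 (hfresh' t ht _ _ ((hbase t' ht').2.1))
    | exact absurd h1 (hfresh' t ht _ _ ((hbase t' ht').2.2))
    | (obtain ⟨rfl, hj⟩ := hainj t ht t' ht' _ _ h1
       first
       | exact absurd hj (by decide)
       | tauto)
  have hout2 : ∀ t ∈ T, ∀ w, (a t 2, w) ∈ G.arcs → w = t.2.1 ∨ w = a t 3 := by
    intro t ht w h
    rw [harc] at h
    obtain ⟨t', ht', hp⟩ := h
    simp only [gadgetArcs2, List.toFinset_cons, List.toFinset_nil, LawfulSingleton.insert_empty_eq,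
      Finset.mem_insert, Finset.mem_singleton, Prod.mk.injEq] at hp
    rcases hp with ⟨h1,h2⟩|⟨h1,h2⟩|⟨h1,h2⟩|⟨h1,h2⟩|⟨h1,h2⟩|⟨h1,h2⟩|⟨h1,h2⟩|⟨h1,h2⟩|⟨h1,h2⟩|⟨h1,h2⟩|⟨h1,h2⟩|⟨h1,h2⟩|⟨h1,h2⟩|⟨h1,h2⟩|⟨h1,h2⟩ <;>
    first
    | exact absurd h1 (hfresh' t ht _ _ ((hbase t' ht').1))
    | exact absurd h1 (hfresh' t ht _ _ ((hbase t' ht').2.1))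
    | exact absurd h1 (hfresh' t ht _ _ ((hbase t' ht').2.2))
    | (obtain ⟨rfl, hj⟩ := hainj t ht t' ht' _ _ h1
       first
       | exact absurd hj (by decide)
       | tauto)
  have hout3 : ∀ t ∈ T, ∀ w, (a t 3, w) ∈ G.arcs → w = a t 2 ∨ w = a t 5 := by
    intro t ht w h
    rw [harc] at h
    obtain ⟨t', ht', hp⟩ := h
    simp only [gadgetArcs2, List.toFinset_cons, List.toFinset_nil, LawfulSingleton.insert_empty_eq,
      Finset.mem_insert, Finset.mem_singleton, Prod.mk.injEq] at hp
    rcases hp with ⟨h1,h2⟩|⟨h1,h2⟩|⟨h1,h2⟩|⟨h1,h2⟩|⟨h1,h2⟩|⟨h1,h2⟩|⟨h1,h2⟩|⟨h1,h2⟩|⟨h1,h2⟩|⟨h1,h2⟩|⟨h1,h2⟩|⟨h1,h2⟩|⟨h1,h2⟩|⟨h1,h2⟩|⟨h1,h2⟩ <;>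
    first
    | exact absurd h1 (hfresh' t ht _ _ ((hbase t' ht').1))
    | exact absurd h1 (hfresh' t ht _ _ ((hbase t' ht').2.1))
    | exact absurd h1 (hfresh' t ht _ _ ((hbase t' ht').2.2))
    | (obtain ⟨rfl, hj⟩ := hainj t ht t' ht' _ _ h1
       first
       | exact absurd hj (by decide)
       | tauto)
  have hout4 : ∀ t ∈ T, ∀ w, (a t 4, w) ∈ G.arcs → w = t.2.2 ∨ w = a t 5 := by
    intro t ht w h
    rw [harc] at h
    obtain ⟨t', ht', hp⟩ := h
    simp only [gadgetArcs2, List.toFinset_cons, List.toFinset_nil, LawfulSingleton.insert_empty_eq,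
      Finset.mem_insert, Finset.mem_singleton, Prod.mk.injEq] at hp
    rcases hp with ⟨h1,h2⟩|⟨h1,h2⟩|⟨h1,h2⟩|⟨h1,h2⟩|⟨h1,h2⟩|⟨h1,h2⟩|⟨h1,h2⟩|⟨h1,h2⟩|⟨h1,h2⟩|⟨h1,h2⟩|⟨h1,h2⟩|⟨h1,h2⟩|⟨h1,h2⟩|⟨h1,h2⟩|⟨h1,h2⟩ <;>
    first
    | exact absurd h1 (hfresh' t ht _ _ ((hbase t' ht').1))
    | exact absurd h1 (hfresh' t ht _ _ ((hbase t' ht').2.1))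
    | exact absurd h1 (hfresh' t ht _ _ ((hbase t' ht').2.2))
    | (obtain ⟨rfl, hj⟩ := hainj t ht t' ht' _ _ h1
       first
       | exact absurd hj (by decide)
       | tauto)
  have hout5 : ∀ t ∈ T, ∀ w, (a t 5, w) ∈ G.arcs → w = a t 4 ∨ w = a t 1 := by
    intro t ht w h
    rw [harc] at h
    obtain ⟨t', ht', hp⟩ := h
    simp only [gadgetArcs2, List.toFinset_cons, List.toFinset_nil, LawfulSingleton.insert_empty_eq,
      Finset.mem_insert, Finset.mem_singleton, Prod.mk.injEq] at hp
    rcases hp with ⟨h1,h2⟩|⟨h1,h2⟩|⟨h1,h2⟩|⟨h1,h2⟩|⟨h1,h2⟩|⟨h1,h2⟩|⟨h1,h2⟩|⟨h1,h2⟩|⟨h1,h2⟩|⟨h1,h2⟩|⟨h1,h2⟩|⟨h1,h2⟩|⟨h1,h2⟩|⟨h1,h2⟩|⟨h1,h2⟩ <;>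
    first
    | exact absurd h1 (hfresh' t ht _ _ ((hbase t' ht').1))
    | exact absurd h1 (hfresh' t ht _ _ ((hbase t' ht').2.1))
    | exact absurd h1 (hfresh' t ht _ _ ((hbase t' ht').2.2))
    | (obtain ⟨rfl, hj⟩ := hainj t ht t' ht' _ _ h1
       first
       | exact absurd hj (by decide)
       | tauto)
  have hin1 : ∀ t ∈ T, ∀ w, (w, a t 1) ∈ G.arcs → w = a t 0 ∨ w = a t 5 := by
    intro t ht w h
    rw [harc] at h
    obtain ⟨t', ht', hp⟩ := h
    simp only [gadgetArcs2, List.toFinset_cons, List.toFinset_nil, LawfulSingleton.insert_empty_eq,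
      Finset.mem_insert, Finset.mem_singleton, Prod.mk.injEq] at hp
    rcases hp with ⟨h1,h2⟩|⟨h1,h2⟩|⟨h1,h2⟩|⟨h1,h2⟩|⟨h1,h2⟩|⟨h1,h2⟩|⟨h1,h2⟩|⟨h1,h2⟩|⟨h1,h2⟩|⟨h1,h2⟩|⟨h1,h2⟩|⟨h1,h2⟩|⟨h1,h2⟩|⟨h1,h2⟩|⟨h1,h2⟩ <;>
    first
    | exact absurd h2 (hfresh' t ht _ _ ((hbase t' ht').1))
    | exact absurd h2 (hfresh' t ht _ _ ((hbase t' ht').2.1))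
    | exact absurd h2 (hfresh' t ht _ _ ((hbase t' ht').2.2))
    | (obtain ⟨rfl, hj⟩ := hainj t ht t' ht' _ _ h2
       first
       | exact absurd hj (by decide)
       | tauto)
  have hin3 : ∀ t ∈ T, ∀ w, (w, a t 3) ∈ G.arcs → w = a t 2 ∨ w = a t 1 := by
    intro t ht w h
    rw [harc] at h
    obtain ⟨t', ht', hp⟩ := h
    simp only [gadgetArcs2, List.toFinset_cons, List.toFinset_nil, LawfulSingleton.insert_empty_eq,
      Finset.mem_insert, Finset.mem_singleton, Prod.mk.injEq] at hp
    rcases hp with ⟨h1,h2⟩|⟨h1,h2⟩|⟨h1,h2⟩|⟨h1,h2⟩|⟨h1,h2⟩|⟨h1,h2⟩|⟨h1,h2⟩|⟨h1,h2⟩|⟨h1,h2⟩|⟨h1,h2⟩|⟨h1,h2⟩|⟨h1,h2⟩|⟨h1,h2⟩|⟨h1,h2⟩|⟨h1,h2⟩ <;>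
    first
    | exact absurd h2 (hfresh' t ht _ _ ((hbase t' ht').1))
    | exact absurd h2 (hfresh' t ht _ _ ((hbase t' ht').2.1))
    | exact absurd h2 (hfresh' t ht _ _ ((hbase t' ht').2.2))
    | (obtain ⟨rfl, hj⟩ := hainj t ht t' ht' _ _ h2
       first
       | exact absurd hj (by decide)
       | tauto)
  have hin5 : ∀ t ∈ T, ∀ w, (w, a t 5) ∈ G.arcs → w = a t 4 ∨ w = a t 3 := by
    intro t ht w h
    rw [harc] at h
    obtain ⟨t', ht', hp⟩ := h
    simp only [gadgetArcs2, List.toFinset_cons, List.toFinset_nil, LawfulSingleton.insert_empty_eq,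
      Finset.mem_insert, Finset.mem_singleton, Prod.mk.injEq] at hp
    rcases hp with ⟨h1,h2⟩|⟨h1,h2⟩|⟨h1,h2⟩|⟨h1,h2⟩|⟨h1,h2⟩|⟨h1,h2⟩|⟨h1,h2⟩|⟨h1,h2⟩|⟨h1,h2⟩|⟨h1,h2⟩|⟨h1,h2⟩|⟨h1,h2⟩|⟨h1,h2⟩|⟨h1,h2⟩|⟨h1,h2⟩ <;>
    first
    | exact absurd h2 (hfresh' t ht _ _ ((hbase t' ht').1))
    | exact absurd h2 (hfresh' t ht _ _ ((hbase t' ht').2.1))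
    | exact absurd h2 (hfresh' t ht _ _ ((hbase t' ht').2.2))
    | (obtain ⟨rfl, hj⟩ := hainj t ht t' ht' _ _ h2
       first
       | exact absurd hj (by decide)
       | tauto)
  have houtX : ∀ u ∈ X, ∀ w, (u, w) ∈ G.arcs → ∃ t ∈ T, t.1 = u ∧ w = a t 0 := by
    intro u hu w h
    rw [harc] at h
    obtain ⟨t', ht', hp⟩ := h
    simp only [gadgetArcs2, List.toFinset_cons, List.toFinset_nil, LawfulSingleton.insert_empty_eq,
      Finset.mem_insert, Finset.mem_singleton, Prod.mk.injEq] at hp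
    have humem : u ∈ X ∪ Y ∪ Z := by simp only [Finset.mem_union]; tauto
    rcases hp with ⟨h1,h2⟩|⟨h1,h2⟩|⟨h1,h2⟩|⟨h1,h2⟩|⟨h1,h2⟩|⟨h1,h2⟩|⟨h1,h2⟩|⟨h1,h2⟩|⟨h1,h2⟩|⟨h1,h2⟩|⟨h1,h2⟩|⟨h1,h2⟩|⟨h1,h2⟩|⟨h1,h2⟩|⟨h1,h2⟩ <;>
    first
    | exact ⟨t', ht', h1.symm, h2⟩
    | exact absurd (by rw [h1]; exact (hTsub t' ht').1) (Finset.disjoint_left.mp hXY.symm hu)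
    | exact absurd (by rw [h1]; exact (hTsub t' ht').1) (Finset.disjoint_left.mp hXZ.symm hu)
    | exact absurd (by rw [h1]; exact (hTsub t' ht').2.1) (Finset.disjoint_left.mp hXY hu)
    | exact absurd (by rw [h1]; exact (hTsub t' ht').2.1) (Finset.disjoint_left.mp hYZ.symm hu)
    | exact absurd (by rw [h1]; exact (hTsub t' ht').2.2) (Finset.disjoint_left.mp hXZ hu)
    | exact absurd (by rw [h1]; exact (hTsub t' ht').2.2) (Finset.disjoint_left.mp hYZ hu)
    | exact absurd h1.symm (hfresh' t' ht' _ _ humem)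
  have houtY : ∀ u ∈ Y, ∀ w, (u, w) ∈ G.arcs → ∃ t ∈ T, t.2.1 = u ∧ w = a t 2 := by
    intro u hu w h
    rw [harc] at h
    obtain ⟨t', ht', hp⟩ := h
    simp only [gadgetArcs2, List.toFinset_cons, List.toFinset_nil, LawfulSingleton.insert_empty_eq,
      Finset.mem_insert, Finset.mem_singleton, Prod.mk.injEq] at hp
    have humem : u ∈ X ∪ Y ∪ Z := by simp only [Finset.mem_union]; tauto
    rcases hp with ⟨h1,h2⟩|⟨h1,h2⟩|⟨h1,h2⟩|⟨h1,h2⟩|⟨h1,h2⟩|⟨h1,h2⟩|⟨h1,h2⟩|⟨h1,h2⟩|⟨h1,h2⟩|⟨h1,h2⟩|⟨h1,h2⟩|⟨h1,h2⟩|⟨h1,h2⟩|⟨h1,h2⟩|⟨h1,h2⟩ <;>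
    first
    | exact ⟨t', ht', h1.symm, h2⟩
    | exact absurd (by rw [h1]; exact (hTsub t' ht').1) (Finset.disjoint_left.mp hXY.symm hu)
    | exact absurd (by rw [h1]; exact (hTsub t' ht').1) (Finset.disjoint_left.mp hXZ.symm hu)
    | exact absurd (by rw [h1]; exact (hTsub t' ht').2.1) (Finset.disjoint_left.mp hXY hu)
    | exact absurd (by rw [h1]; exact (hTsub t' ht').2.1) (Finset.disjoint_left.mp hYZ.symm hu)
    | exact absurd (by rw [h1]; exact (hTsub t' ht').2.2) (Finset.disjoint_left.mp hXZ hu)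
    | exact absurd (by rw [h1]; exact (hTsub t' ht').2.2) (Finset.disjoint_left.mp hYZ hu)
    | exact absurd h1.symm (hfresh' t' ht' _ _ humem)
  have houtZ : ∀ u ∈ Z, ∀ w, (u, w) ∈ G.arcs → ∃ t ∈ T, t.2.2 = u ∧ w = a t 4 := by
    intro u hu w h
    rw [harc] at h
    obtain ⟨t', ht', hp⟩ := h
    simp only [gadgetArcs2, List.toFinset_cons, List.toFinset_nil, LawfulSingleton.insert_empty_eq,
      Finset.mem_insert, Finset.mem_singleton, Prod.mk.injEq] at hp
    have humem : u ∈ X ∪ Y ∪ Z := by simp only [Finset.mem_union]; tauto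
    rcases hp with ⟨h1,h2⟩|⟨h1,h2⟩|⟨h1,h2⟩|⟨h1,h2⟩|⟨h1,h2⟩|⟨h1,h2⟩|⟨h1,h2⟩|⟨h1,h2⟩|⟨h1,h2⟩|⟨h1,h2⟩|⟨h1,h2⟩|⟨h1,h2⟩|⟨h1,h2⟩|⟨h1,h2⟩|⟨h1,h2⟩ <;>
    first
    | exact ⟨t', ht', h1.symm, h2⟩
    | exact absurd (by rw [h1]; exact (hTsub t' ht').1) (Finset.disjoint_left.mp hXY.symm hu)
    | exact absurd (by rw [h1]; exact (hTsub t' ht').1) (Finset.disjoint_left.mp hXZ.symm hu)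
    | exact absurd (by rw [h1]; exact (hTsub t' ht').2.1) (Finset.disjoint_left.mp hXY hu)
    | exact absurd (by rw [h1]; exact (hTsub t' ht').2.1) (Finset.disjoint_left.mp hYZ.symm hu)
    | exact absurd (by rw [h1]; exact (hTsub t' ht').2.2) (Finset.disjoint_left.mp hXZ hu)
    | exact absurd (by rw [h1]; exact (hTsub t' ht').2.2) (Finset.disjoint_left.mp hYZ hu)
    | exact absurd h1.symm (hfresh' t' ht' _ _ humem)
  constructor
  · rintro ⟨P, ⟨hPackP, hGamma⟩, hPerf⟩
    have huniq : ∀ l ∈ P, ∀ l' ∈ P, ∀ v, v ∈ l → v ∈ l' → l = l' := by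
      intro l hl l' hl' v hv hv'
      by_contra hne
      exact hPackP.2 l hl l' hl' hne v hv hv'
    have hsuccOf : ∀ l ∈ P, ∀ v ∈ l, ∃ w ∈ l, (v, w) ∈ G.arcs := by
      intro l hl v hv
      obtain ⟨k, hk, rfl⟩ := exists_cyc_index hv
      have hlen : 0 < l.length := by have := (hPackP.1 l hl).1; omega
      exact ⟨cyc l (k+1), cyc_mem _ _ hlen, succ_arc (hPackP.1 l hl) k⟩
    have hpredOf : ∀ l ∈ P, ∀ v ∈ l, ∃ w ∈ l, (w, v) ∈ G.arcs := by
      intro l hl v hv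
      obtain ⟨k, hk, rfl⟩ := exists_cyc_index hv
      have hlen : 0 < l.length := by have := (hPackP.1 l hl).1; omega
      exact ⟨cyc l (k + l.length - 1), cyc_mem _ _ hlen, pred_arc (hPackP.1 l hl) k⟩
    have hdichot : ∀ l ∈ P, ∀ v ∈ l, (IsNationalTo G l 0 ∧ l.length ≤ 3) ∨
        (∃ w, w ∈ l ∧ (v, w) ∈ G.arcs ∧ (w, v) ∈ G.arcs ∧ v ≠ w ∧ ∀ x ∈ l, x = v ∨ x = w) := by
      intro l hl v hv
      rcases (gamma_classify (hGamma l hl)).2 with h | h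
      · left; exact h
      · right
        obtain ⟨u, w, rfl, hne, huw, hwu⟩ := two_cycle_struct (hPackP.1 l hl) h
        simp only [List.mem_cons, List.not_mem_nil, or_false] at hv
        rcases hv with rfl | rfl
        · exact ⟨w, by simp, huw, hwu, hne, by intro x hx; simp at hx; tauto⟩
        · exact ⟨u, by simp, hwu, huw, Ne.symm hne, by intro x hx; simp at hx; tauto⟩
    have htwo : ∀ l ∈ P, ∀ v ∈ l, G.country v = 1 →
        ∃ w, w ∈ l ∧ (v, w) ∈ G.arcs ∧ (w, v) ∈ G.arcs ∧ v ≠ w ∧ ∀ x ∈ l, x = v ∨ x = w := by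
      intro l hl v hv hc
      rcases hdichot l hl v hv with ⟨hnat, _⟩ | h
      · have := hnat v hv
        rw [hc] at this
        exact absurd this (by decide)
      · exact h
    have hF2 : ∀ t ∈ T, ∀ l ∈ P, t.1 ∈ l → a t 0 ∈ l →
        (∃ l2 ∈ P, t.2.1 ∈ l2 ∧ a t 2 ∈ l2 ∧ ∀ x ∈ l2, x = a t 2 ∨ x = t.2.1) ∧
        (∃ l3 ∈ P, t.2.2 ∈ l3 ∧ a t 4 ∈ l3 ∧ ∀ x ∈ l3, x = a t 4 ∨ x = t.2.2) := by
      intro t ht l hl ht1 ha0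
      obtain ⟨w, hwl, haw, hwa, hne, hall⟩ := htwo l hl (a t 0) ha0 (hcA t ht).1
      have hwt1 : w = t.1 := by
        rcases hall t.1 ht1 with h | h
        · exact absurd h.symm (hfresh' t ht 0 t.1 (hbase t ht).1)
        · exact h.symm
      subst hwt1
      have ha1nl : a t 1 ∉ l := by
        intro hmem
        rcases hall _ hmem with h | h
        · exact hane t ht 1 0 (by decide) h
        · exact hfresh' t ht 1 t.1 (hbase t ht).1 h
      obtain ⟨l1, hl1, ha1⟩ := hPerf (a t 1) (hvA t ht 1)
      have hl1nat : IsNationalTo G l1 0 := by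
        rcases hdichot l1 hl1 _ ha1 with h | ⟨w1, hw1, h1w, hw1', hne1, hall1⟩
        · exact h.1
        · exfalso
          rcases hout1 t ht w1 h1w with rfl | rfl
          · have : l1 = l := huniq l1 hl1 l hl _ hw1 ha0
            rw [this] at ha1
            exact ha1nl ha1
          · rcases hin1 t ht _ hw1' with h | h
            · exact hane t ht 3 0 (by decide) h
            · exact hane t ht 3 5 (by decide) h
      obtain ⟨w3, hw3, h13⟩ := hsuccOf l1 hl1 _ ha1
      rcases hout1 t ht w3 h13 with rfl | rfl
      · exfalso
        have := hl1nat _ hw3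
        rw [(hcA t ht).1] at this
        exact absurd this (by decide)
      obtain ⟨w5, hw5, h35⟩ := hsuccOf l1 hl1 _ hw3
      rcases hout3 t ht w5 h35 with rfl | rfl
      · exfalso
        have := hl1nat _ hw5
        rw [(hcA t ht).2.1] at this
        exact absurd this (by decide)
      constructor
      · obtain ⟨l2, hl2, ha2⟩ := hPerf (a t 2) (hvA t ht 2)
        obtain ⟨w2, hw2l2, h2w, hw2', hne2, hall2⟩ := htwo l2 hl2 _ ha2 (hcA t ht).2.1
        rcases hout2 t ht w2 h2w with rfl | rfl
        · exact ⟨l2, hl2, hw2l2, ha2, hall2⟩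
        · exfalso
          have : l2 = l1 := huniq l2 hl2 l1 hl1 _ hw2l2 hw3
          rw [this] at ha2
          have := hl1nat _ ha2
          rw [(hcA t ht).2.1] at this
          exact absurd this (by decide)
      · obtain ⟨l3, hl3, ha4⟩ := hPerf (a t 4) (hvA t ht 4)
        obtain ⟨w4, hw4l3, h4w, hw4', hne4, hall3⟩ := htwo l3 hl3 _ ha4 (hcA t ht).2.2
        rcases hout4 t ht w4 h4w with rfl | rfl
        · exact ⟨l3, hl3, hw4l3, ha4, hall3⟩
        · exfalso
          have : l3 = l1 := huniq l3 hl3 l1 hl1 _ hw4l3 hw5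
          rw [this] at ha4
          have := hl1nat _ ha4
          rw [(hcA t ht).2.2] at this
          exact absurd this (by decide)
    have hF3 : ∀ t ∈ T, ∀ l2 ∈ P, t.2.1 ∈ l2 → a t 2 ∈ l2 → ∃ l ∈ P, t.1 ∈ l ∧ a t 0 ∈ l := by
      intro t ht l2 hl2 hy ha2
      obtain ⟨w2, hw2, h2w, hw2', hne2, hall2⟩ := htwo l2 hl2 _ ha2 (hcA t ht).2.1
      have hw2y : w2 = t.2.1 := by
        rcases hall2 _ hy with h | h
        · exact absurd h.symm (hfresh' t ht 2 _ (hbase t ht).2.1)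
        · exact h.symm
      subst hw2y
      have ha3nl2 : a t 3 ∉ l2 := by
        intro hm
        rcases hall2 _ hm with h | h
        · exact hane t ht 3 2 (by decide) h
        · exact hfresh' t ht 3 _ (hbase t ht).2.1 h
      obtain ⟨l4, hl4, ha3⟩ := hPerf (a t 3) (hvA t ht 3)
      have hl4nat : IsNationalTo G l4 0 := by
        rcases hdichot l4 hl4 _ ha3 with h | ⟨w4, hw4, h3w, hw3', hne4, hall4⟩
        · exact h.1
        · exfalso
          rcases hout3 t ht w4 h3w with rfl | rfl
          · have : l4 = l2 := huniq l4 hl4 l2 hl2 _ hw4 ha2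
            rw [this] at ha3
            exact ha3nl2 ha3
          · rcases hin3 t ht _ hw3' with h | h
            · exact hane t ht 5 2 (by decide) h
            · exact hane t ht 5 1 (by decide) h
      obtain ⟨w1, hw1, h1a⟩ := hpredOf l4 hl4 _ ha3
      rcases hin3 t ht w1 h1a with rfl | rfl
      · exfalso
        have := hl4nat _ hw1
        rw [(hcA t ht).2.1] at this
        exact absurd this (by decide)
      obtain ⟨l0, hl0, ha0⟩ := hPerf (a t 0) (hvA t ht 0)
      obtain ⟨w0, hw0, h0w, hw0', hne0, hall0⟩ := htwo l0 hl0 _ ha0 (hcA t ht).1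
      rcases hout0 t ht w0 h0w with rfl | rfl
      · exact ⟨l0, hl0, hw0, ha0⟩
      · exfalso
        have : l0 = l4 := huniq l0 hl0 l4 hl4 _ hw0 hw1
        rw [this] at ha0
        have := hl4nat _ ha0
        rw [(hcA t ht).1] at this
        exact absurd this (by decide)
    have hF3z : ∀ t ∈ T, ∀ l3 ∈ P, t.2.2 ∈ l3 → a t 4 ∈ l3 → ∃ l ∈ P, t.1 ∈ l ∧ a t 0 ∈ l := by
      intro t ht l3 hl3 hz ha4
      obtain ⟨w4, hw4, h4w, hw4', hne4, hall3⟩ := htwo l3 hl3 _ ha4 (hcA t ht).2.2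
      have hw4z : w4 = t.2.2 := by
        rcases hall3 _ hz with h | h
        · exact absurd h.symm (hfresh' t ht 4 _ (hbase t ht).2.2)
        · exact h.symm
      subst hw4z
      have ha5nl3 : a t 5 ∉ l3 := by
        intro hm
        rcases hall3 _ hm with h | h
        · exact hane t ht 5 4 (by decide) h
        · exact hfresh' t ht 5 _ (hbase t ht).2.2 h
      obtain ⟨l5, hl5, ha5⟩ := hPerf (a t 5) (hvA t ht 5)
      have hl5nat : IsNationalTo G l5 0 := by
        rcases hdichot l5 hl5 _ ha5 with h | ⟨w5, hw5, h5w, hw5', hne5, hall5⟩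
        · exact h.1
        · exfalso
          rcases hout5 t ht w5 h5w with rfl | rfl
          · have : l5 = l3 := huniq l5 hl5 l3 hl3 _ hw5 ha4
            rw [this] at ha5
            exact ha5nl3 ha5
          · rcases hin5 t ht _ hw5' with h | h
            · exact hane t ht 1 4 (by decide) h
            · exact hane t ht 1 3 (by decide) h
      obtain ⟨w1, hw1, h5a⟩ := hsuccOf l5 hl5 _ ha5
      rcases hout5 t ht w1 h5a with rfl | rfl
      · exfalso
        have := hl5nat _ hw1
        rw [(hcA t ht).2.2] at this
        exact absurd this (by decide)
      obtain ⟨l0, hl0, ha0⟩ := hPerf (a t 0) (hvA t ht 0)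
      obtain ⟨w0, hw0, h0w, hw0', hne0, hall0⟩ := htwo l0 hl0 _ ha0 (hcA t ht).1
      rcases hout0 t ht w0 h0w with rfl | rfl
      · exact ⟨l0, hl0, hw0, ha0⟩
      · exfalso
        have : l0 = l5 := huniq l0 hl0 l5 hl5 _ hw0 hw1
        rw [this] at ha0
        have := hl5nat _ ha0
        rw [(hcA t ht).1] at this
        exact absurd this (by decide)
    refine ⟨T.filter (fun t => ∃ l ∈ P, t.1 ∈ l ∧ a t 0 ∈ l), Finset.filter_subset _ _, ?_⟩
    intro u hu
    obtain ⟨l, hl, hul⟩ := hPerf u (hvU u hu)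
    rcases Finset.mem_union.mp hu with hu' | huZ
    · rcases Finset.mem_union.mp hu' with huX | huY
      · -- u ∈ X
        rcases hdichot l hl u hul with ⟨hnat, _⟩ | ⟨w, hwl, huw, hwu, hnew, hall⟩
        · exfalso
          obtain ⟨w, hwl, huw⟩ := hsuccOf l hl u hul
          obtain ⟨t0, ht0, _, rfl⟩ := houtX u huX w huw
          have := hnat _ hwl
          rw [(hcA t0 ht0).1] at this
          exact absurd this (by decide)
        · obtain ⟨t0, ht0, ht0u, rfl⟩ := houtX u huX w huw
          refine ⟨t0, ⟨Finset.mem_filter.2 ⟨ht0, l, hl, by rw [ht0u]; exact hul, hwl⟩,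
            Or.inl ht0u.symm⟩, ?_⟩
          rintro t' ⟨ht'M, h | h | h⟩
          · have hmf := Finset.mem_filter.1 ht'M
            have ht'T := hmf.1
            obtain ⟨l', hl', ht'1, ha'0⟩ := hmf.2
            have hl'l : l' = l := huniq l' hl' l hl u (by rw [h]; exact ht'1) hul
            rw [hl'l] at ha'0
            rcases hall _ ha'0 with h' | h'
            · exact absurd h' (hfresh' t' ht'T 0 u hu)
            · exact (hainj t' ht'T t0 ht0 0 0 h').1
          · exact absurd (by rw [h]; exact (hTsub t' (Finset.mem_filter.1 ht'M).1).2.1)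
              (Finset.disjoint_left.mp hXY huX)
          · exact absurd (by rw [h]; exact (hTsub t' (Finset.mem_filter.1 ht'M).1).2.2)
              (Finset.disjoint_left.mp hXZ huX)
      · -- u ∈ Y
        rcases hdichot l hl u hul with ⟨hnat, _⟩ | ⟨w, hwl, huw, hwu, hnew, hall⟩
        · exfalso
          obtain ⟨w, hwl, huw⟩ := hsuccOf l hl u hul
          obtain ⟨t0, ht0, _, rfl⟩ := houtY u huY w huw
          have := hnat _ hwl
          rw [(hcA t0 ht0).2.1] at this
          exact absurd this (by decide)
        · obtain ⟨t0, ht0, ht0u, rfl⟩ := houtY u huY w huw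
          have hM0 : ∃ l0 ∈ P, t0.1 ∈ l0 ∧ a t0 0 ∈ l0 :=
            hF3 t0 ht0 l hl (by rw [ht0u]; exact hul) hwl
          refine ⟨t0, ⟨Finset.mem_filter.2 ⟨ht0, hM0⟩, Or.inr (Or.inl ht0u.symm)⟩, ?_⟩
          rintro t' ⟨ht'M, h | h | h⟩
          · exact absurd (by rw [h]; exact (hTsub t' (Finset.mem_filter.1 ht'M).1).1)
              (Finset.disjoint_left.mp hXY.symm huY)
          · have hmf := Finset.mem_filter.1 ht'M
            have ht'T := hmf.1
            obtain ⟨l', hl', ht'1, ha'0⟩ := hmf.2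
            obtain ⟨⟨l2', hl2', hy', ha2', hall2'⟩, _⟩ := hF2 t' ht'T l' hl' ht'1 ha'0
            have hl2l : l2' = l := huniq l2' hl2' l hl u (by rw [h]; exact hy') hul
            rw [hl2l] at ha2'
            rcases hall _ ha2' with h' | h'
            · exact absurd h' (hfresh' t' ht'T 2 u hu)
            · exact (hainj t' ht'T t0 ht0 2 2 h').1
          · exact absurd (by rw [h]; exact (hTsub t' (Finset.mem_filter.1 ht'M).1).2.2)
              (Finset.disjoint_left.mp hYZ huY)
    · -- u ∈ Z
      rcases hdichot l hl u hul with ⟨hnat, _⟩ | ⟨w, hwl, huw, hwu, hnew, hall⟩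
      · exfalso
        obtain ⟨w, hwl, huw⟩ := hsuccOf l hl u hul
        obtain ⟨t0, ht0, _, rfl⟩ := houtZ u huZ w huw
        have := hnat _ hwl
        rw [(hcA t0 ht0).2.2] at this
        exact absurd this (by decide)
      · obtain ⟨t0, ht0, ht0u, rfl⟩ := houtZ u huZ w huw
        have hM0 : ∃ l0 ∈ P, t0.1 ∈ l0 ∧ a t0 0 ∈ l0 :=
          hF3z t0 ht0 l hl (by rw [ht0u]; exact hul) hwl
        refine ⟨t0, ⟨Finset.mem_filter.2 ⟨ht0, hM0⟩, Or.inr (Or.inr ht0u.symm)⟩, ?_⟩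
        rintro t' ⟨ht'M, h | h | h⟩
        · exact absurd (by rw [h]; exact (hTsub t' (Finset.mem_filter.1 ht'M).1).1)
            (Finset.disjoint_left.mp hXZ.symm huZ)
        · exact absurd (by rw [h]; exact (hTsub t' (Finset.mem_filter.1 ht'M).1).2.1)
            (Finset.disjoint_left.mp hYZ.symm huZ)
        · have hmf := Finset.mem_filter.1 ht'M
          have ht'T := hmf.1
          obtain ⟨l', hl', ht'1, ha'0⟩ := hmf.2
          obtain ⟨_, ⟨l3', hl3', hz', ha4', hall3'⟩⟩ := hF2 t' ht'T l' hl' ht'1 ha'0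
          have hl3l : l3' = l := huniq l3' hl3' l hl u (by rw [h]; exact hz') hul
          rw [hl3l] at ha4'
          rcases hall _ ha4' with h' | h'
          · exact absurd h' (hfresh' t' ht'T 4 u hu)
          · exact (hainj t' ht'T t0 ht0 4 4 h').1
  · rintro ⟨M, hMT, hM⟩
    have hMu : ∀ t ∈ M, ∀ t' ∈ M, ∀ u ∈ X ∪ Y ∪ Z,
        (u = t.1 ∨ u = t.2.1 ∨ u = t.2.2) → (u = t'.1 ∨ u = t'.2.1 ∨ u = t'.2.2) → t = t' := by
      intro t ht t' ht' u hu h h'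
      exact ((hM u hu).unique ⟨ht, h⟩ ⟨ht', h'⟩)
    have harcmem : ∀ t ∈ T, ∀ p ∈ gadgetArcs2 a t, p ∈ G.arcs := by
      intro t ht p hp
      rw [harcs]
      exact Finset.mem_biUnion.2 ⟨t, ht, hp⟩
    set P : Finset (List ℕ) := T.biUnion (fun t =>
      if t ∈ M then ({[t.1, a t 0], [t.2.1, a t 2], [t.2.2, a t 4], [a t 1, a t 3, a t 5]} : Finset (List ℕ))
      else ({[a t 0, a t 1], [a t 2, a t 3], [a t 4, a t 5]} : Finset (List ℕ))) with hPdef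
    have hGam : ∀ l ∈ P, IsGammaCycle G gadgetParams2 l := by
      intro l hl
      obtain ⟨t, ht, hlf⟩ := Finset.mem_biUnion.1 hl
      by_cases htM : t ∈ M <;>
        simp only [htM, if_true, if_false, Finset.mem_insert, Finset.mem_singleton] at hlf
      · rcases hlf with rfl | rfl | rfl | rfl
        · exact gamma_two (hvU _ (hbase t ht).1) (hvA t ht 0)
            (harcmem t ht _ (by simp [gadgetArcs2])) (harcmem t ht _ (by simp [gadgetArcs2]))
            (by rw [hcU _ (hbase t ht).1, (hcA t ht).1]; decide)
        · exact gamma_two (hvU _ (hbase t ht).2.1) (hvA t ht 2)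
            (harcmem t ht _ (by simp [gadgetArcs2])) (harcmem t ht _ (by simp [gadgetArcs2]))
            (by rw [hcU _ (hbase t ht).2.1, (hcA t ht).2.1]; decide)
        · exact gamma_two (hvU _ (hbase t ht).2.2) (hvA t ht 4)
            (harcmem t ht _ (by simp [gadgetArcs2])) (harcmem t ht _ (by simp [gadgetArcs2]))
            (by rw [hcU _ (hbase t ht).2.2, (hcA t ht).2.2]; decide)
        · exact gamma_tri (hvA t ht 1) (hvA t ht 3) (hvA t ht 5)
            (harcmem t ht _ (by simp [gadgetArcs2])) (harcmem t ht _ (by simp [gadgetArcs2]))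
            (harcmem t ht _ (by simp [gadgetArcs2]))
            (hane t ht 1 3 (by decide)) (hane t ht 1 5 (by decide)) (hane t ht 3 5 (by decide))
            (hcB t ht).1 (hcB t ht).2.1 (hcB t ht).2.2
      · rcases hlf with rfl | rfl | rfl
        · exact gamma_two (hvA t ht 0) (hvA t ht 1)
            (harcmem t ht _ (by simp [gadgetArcs2])) (harcmem t ht _ (by simp [gadgetArcs2]))
            (by rw [(hcA t ht).1, (hcB t ht).1]; decide)
        · exact gamma_two (hvA t ht 2) (hvA t ht 3)
            (harcmem t ht _ (by simp [gadgetArcs2])) (harcmem t ht _ (by simp [gadgetArcs2]))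
            (by rw [(hcA t ht).2.1, (hcB t ht).2.1]; decide)
        · exact gamma_two (hvA t ht 4) (hvA t ht 5)
            (harcmem t ht _ (by simp [gadgetArcs2])) (harcmem t ht _ (by simp [gadgetArcs2]))
            (by rw [(hcA t ht).2.2, (hcB t ht).2.2]; decide)
    have hdisj : ∀ l ∈ P, ∀ l' ∈ P, ∀ v, v ∈ l → v ∈ l' → l = l' := by
      intro l hl l' hl' v hv hv'
      obtain ⟨t, ht, hlf⟩ := Finset.mem_biUnion.1 hl
      obtain ⟨t', ht', hlf'⟩ := Finset.mem_biUnion.1 hl'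
      by_cases htM : t ∈ M <;> by_cases htM' : t' ∈ M <;>
        simp only [htM, htM', if_true, if_false, Finset.mem_insert, Finset.mem_singleton]
          at hlf hlf' <;>
      (first
        | (rcases hlf with rfl | rfl | rfl | rfl)
        | (rcases hlf with rfl | rfl | rfl)) <;>
      (first
        | (rcases hlf' with rfl | rfl | rfl | rfl)
        | (rcases hlf' with rfl | rfl | rfl)) <;>
      simp only [List.mem_cons, List.not_mem_nil, or_false] at hv hv' <;>
      (first
        | (rcases hv with rfl | rfl | rfl)
        | (rcases hv with rfl | rfl)) <;>
      (first
        | (rcases hv' with h | h | h)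
        | (rcases hv' with h | h)) <;>
      first
      | rfl
      | (exact absurd h (hfresh' t ht _ _ (hbase t' ht').1))
      | (exact absurd h (hfresh' t ht _ _ (hbase t' ht').2.1))
      | (exact absurd h (hfresh' t ht _ _ (hbase t' ht').2.2))
      | (exact absurd h.symm (hfresh' t' ht' _ _ (hbase t ht).1))
      | (exact absurd h.symm (hfresh' t' ht' _ _ (hbase t ht).2.1))
      | (exact absurd h.symm (hfresh' t' ht' _ _ (hbase t ht).2.2))
      | exact congrArg (fun p => [p.1, a p 0]) (hMu t htM t' htM' _ (hbase t ht).1 (Or.inl rfl) (Or.inl h))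
      | exact congrArg (fun p => [p.2.1, a p 2]) (hMu t htM t' htM' _ (hbase t ht).2.1 (Or.inr (Or.inl rfl)) (Or.inr (Or.inl h)))
      | exact congrArg (fun p => [p.2.2, a p 4]) (hMu t htM t' htM' _ (hbase t ht).2.2 (Or.inr (Or.inr rfl)) (Or.inr (Or.inr h)))
      | (exact absurd (by rw [← h]; exact (hTsub t ht).1) (Finset.disjoint_left.mp hXY.symm (hTsub t' ht').2.1))
      | (exact absurd (by rw [← h]; exact (hTsub t ht).1) (Finset.disjoint_left.mp hXZ.symm (hTsub t' ht').2.2))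
      | (exact absurd (by rw [← h]; exact (hTsub t ht).2.1) (Finset.disjoint_left.mp hXY (hTsub t' ht').1))
      | (exact absurd (by rw [← h]; exact (hTsub t ht).2.1) (Finset.disjoint_left.mp hYZ.symm (hTsub t' ht').2.2))
      | (exact absurd (by rw [← h]; exact (hTsub t ht).2.2) (Finset.disjoint_left.mp hXZ (hTsub t' ht').1))
      | (exact absurd (by rw [← h]; exact (hTsub t ht).2.2) (Finset.disjoint_left.mp hYZ (hTsub t' ht').2.1))
      | exact absurd (hainj t ht t' ht' _ _ h).2 (by decide)
      | exact congrArg (fun p => [p.1, a p 0]) (hainj t ht t' ht' _ _ h).1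
      | exact congrArg (fun p => [p.2.1, a p 2]) (hainj t ht t' ht' _ _ h).1
      | exact congrArg (fun p => [p.2.2, a p 4]) (hainj t ht t' ht' _ _ h).1
      | exact congrArg (fun p => [a p 1, a p 3, a p 5]) (hainj t ht t' ht' _ _ h).1
      | exact congrArg (fun p => [a p 0, a p 1]) (hainj t ht t' ht' _ _ h).1
      | exact congrArg (fun p => [a p 2, a p 3]) (hainj t ht t' ht' _ _ h).1
      | exact congrArg (fun p => [a p 4, a p 5]) (hainj t ht t' ht' _ _ h).1
      | exact absurd ((hainj t ht t' ht' _ _ h).1 ▸ htM) htM'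
      | exact absurd ((hainj t ht t' ht' _ _ h).1.symm ▸ htM') htM
    have hcov : ∀ v ∈ G.verts, ∃ l ∈ P, v ∈ l := by
      intro v hv
      rw [hverts] at hv
      rcases Finset.mem_union.1 hv with hb | ha
      · obtain ⟨t, ⟨htM, hco⟩, _⟩ := hM v hb
        have ht : t ∈ T := hMT htM
        rcases hco with rfl | rfl | rfl
        · exact ⟨[t.1, a t 0], Finset.mem_biUnion.2 ⟨t, ht, by simp [htM]⟩, by simp⟩
        · exact ⟨[t.2.1, a t 2], Finset.mem_biUnion.2 ⟨t, ht, by simp [htM]⟩, by simp⟩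
        · exact ⟨[t.2.2, a t 4], Finset.mem_biUnion.2 ⟨t, ht, by simp [htM]⟩, by simp⟩
      · obtain ⟨t, ht, himg⟩ := Finset.mem_biUnion.1 ha
        obtain ⟨j, _, rfl⟩ := Finset.mem_image.1 himg
        by_cases htM : t ∈ M
        · fin_cases j
          · exact ⟨[t.1, a t 0], Finset.mem_biUnion.2 ⟨t, ht, by simp [htM]⟩, by simp⟩
          · exact ⟨[a t 1, a t 3, a t 5], Finset.mem_biUnion.2 ⟨t, ht, by simp [htM]⟩, by simp⟩
          · exact ⟨[t.2.1, a t 2], Finset.mem_biUnion.2 ⟨t, ht, by simp [htM]⟩, by simp⟩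
          · exact ⟨[a t 1, a t 3, a t 5], Finset.mem_biUnion.2 ⟨t, ht, by simp [htM]⟩, by simp⟩
          · exact ⟨[t.2.2, a t 4], Finset.mem_biUnion.2 ⟨t, ht, by simp [htM]⟩, by simp⟩
          · exact ⟨[a t 1, a t 3, a t 5], Finset.mem_biUnion.2 ⟨t, ht, by simp [htM]⟩, by simp⟩
        · fin_cases j
          · exact ⟨[a t 0, a t 1], Finset.mem_biUnion.2 ⟨t, ht, by simp [htM]⟩, by simp⟩
          · exact ⟨[a t 0, a t 1], Finset.mem_biUnion.2 ⟨t, ht, by simp [htM]⟩, by simp⟩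
          · exact ⟨[a t 2, a t 3], Finset.mem_biUnion.2 ⟨t, ht, by simp [htM]⟩, by simp⟩
          · exact ⟨[a t 2, a t 3], Finset.mem_biUnion.2 ⟨t, ht, by simp [htM]⟩, by simp⟩
          · exact ⟨[a t 4, a t 5], Finset.mem_biUnion.2 ⟨t, ht, by simp [htM]⟩, by simp⟩
          · exact ⟨[a t 4, a t 5], Finset.mem_biUnion.2 ⟨t, ht, by simp [htM]⟩, by simp⟩
    exact ⟨P, ⟨⟨fun l hl => (hGam l hl).1,
      fun l hl l' hl' hne v hv hv' => hne (hdisj l hl l' hl' v hv hv')⟩, hGam⟩, hcov⟩
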